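/- Let p, q ≥ 2 be integers, μ ∈ ℂ ∖ {0}, r = gcd(p−1, q−1), A = 1/p^{1/(p−1)}, B = 1/q^{1/(q−1)}, c_k = (−2·arg μ + 2πk)/(p−1) for k ∈ ℤ, and define P_k : ℝ → ℂ by P_k(θ) = μ(A^p e^{i(p(q−1)θ/r + p c_k)} + A e^{−i((q−1)θ/r + c_k)}) + B^q e^{i q(p−1)θ/r} + B e^{−i(p−1)θ/r} (the restriction of P(u,v;μ) to the singular curve C_k). Then for every θ ∈ ℝ, the derivative of P_k satisfies dP_k/dθ = −2 e^{i(p−1)(q−1)θ/(2r)} · Φ(θ), where Φ(θ) = (−1)^k |μ| ((q−1)/r) A sin((p+1)(q−1)θ/(2r) + ((p+1)/2)c_k) + ((p−1)/r) B sin((p−1)(q+1)θ/(2r)) is real valued. -/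

import Mathlib

noncomputable def E (x : ℝ) : ℂ := Complex.exp (Complex.I * (x : ℂ))

lemma E_def (x : ℝ) : Complex.exp (Complex.I * (x : ℂ)) = E x := rfl

lemma E_neg_def (x : ℝ) : Complex.exp (-(Complex.I * (x : ℂ))) = E (-x) := by
  unfold E; congr 1; push_cast; ring

lemma E_mul (x y : ℝ) : E x * E y = E (x + y) := by
  unfold E; rw [← Complex.exp_add]; congr 1; push_cast; ring

lemma E_congr {x y : ℝ} (h : x = y) : E x = E y := by rw [h]

lemma sin_cast (x : ℝ) : ((Real.sin x : ℝ) : ℂ) = (E (-x) - E x) * Complex.I / 2 := by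
  rw [Complex.ofReal_sin, Complex.sin]
  unfold E; congr 3 <;> (push_cast; ring_nf)

lemma negone_pow (k : ℕ) : ((-1 : ℂ)) ^ k = E (Real.pi * k) := by
  rw [← Complex.exp_pi_mul_I, ← Complex.exp_nat_mul]
  unfold E; congr 1; push_cast; ring

lemma hda (c d : ℝ) (f : ℝ → ℝ) (hf : ∀ t, f t = c * t + d) (θ : ℝ) :
    HasDerivAt (fun t : ℝ => Complex.exp (Complex.I * ((f t : ℝ) : ℂ)))
      (Complex.I * c * Complex.exp (Complex.I * ((f θ : ℝ) : ℂ))) θ := by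
  have hfun : (fun t : ℝ => Complex.exp (Complex.I * ((f t : ℝ) : ℂ)))
      = fun t : ℝ => Complex.exp (Complex.I * ((c * t + d : ℝ) : ℂ)) := by
    funext t; rw [hf t]
  rw [hfun, hf θ]
  have h0 : HasDerivAt (fun t : ℝ => c * t + d) c θ := by
    simpa using ((hasDerivAt_id θ).const_mul c).add_const d
  have h : HasDerivAt (fun t : ℝ => ((c * t + d : ℝ) : ℂ)) (c : ℂ) θ := h0.ofReal_comp
  have := (h.const_mul Complex.I).cexp
  convert this using 1; ring

lemma hdan (c d : ℝ) (f : ℝ → ℝ) (hf : ∀ t, f t = c * t + d) (θ : ℝ) :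
    HasDerivAt (fun t : ℝ => Complex.exp (-(Complex.I * ((f t : ℝ) : ℂ))))
      (-(Complex.I * c) * Complex.exp (-(Complex.I * ((f θ : ℝ) : ℂ)))) θ := by
  have key : ∀ x : ℝ, Complex.exp (-(Complex.I * (x : ℂ)))
      = Complex.exp (Complex.I * ((-x : ℝ) : ℂ)) := by
    intro x; congr 1; push_cast; ring
  have hfun : (fun t : ℝ => Complex.exp (-(Complex.I * ((f t : ℝ) : ℂ))))
      = fun t : ℝ => Complex.exp (Complex.I * ((-(f t) : ℝ) : ℂ)) := by
    funext t; rw [key]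
  rw [hfun, key]
  have := hda (-c) (-d) (fun t => -(f t))
    (by intro t; show -(f t) = -c * t + -d; rw [hf t]; ring) θ
  convert this using 1; push_cast; ring

/-- the derivative of the restriction `P_k` of `P(u,v;μ)` to the singular
curve `C_k` satisfies `dP_k/dθ = -2 e^{i(p-1)(q-1)θ/(2r)} Φ(θ)` with `Φ` real valued. -/
theorem derivative_of_restriction_to_singular_curve
    (p q : ℕ) (hp : 2 ≤ p) (hq : 2 ≤ q) (μ : ℂ) (hμ : μ ≠ 0)
    (r : ℕ) (hr : r = Nat.gcd (p - 1) (q - 1))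
    (A B : ℝ)
    (hA : A = 1 / (p : ℝ) ^ ((1 : ℝ) / ((p : ℝ) - 1)))
    (hB : B = 1 / (q : ℝ) ^ ((1 : ℝ) / ((q : ℝ) - 1)))
    (k : ℕ) (hk : k < r)
    (ck : ℝ) (hck : ck = (-2 * Complex.arg μ + 2 * Real.pi * k) / ((p : ℝ) - 1))
    (Pk : ℝ → ℂ)
    (hPk : ∀ θ : ℝ, Pk θ =
      μ * ((A : ℂ) ^ p
            * Complex.exp (Complex.I * (((p : ℝ) * ((q : ℝ) - 1) * θ / r + p * ck : ℝ) : ℂ))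
          + (A : ℂ)
            * Complex.exp (-(Complex.I * ((((q : ℝ) - 1) * θ / r + ck : ℝ) : ℂ))))
        + (B : ℂ) ^ q
            * Complex.exp (Complex.I * (((q : ℝ) * ((p : ℝ) - 1) * θ / r : ℝ) : ℂ))
        + (B : ℂ) * Complex.exp (-(Complex.I * ((((p : ℝ) - 1) * θ / r : ℝ) : ℂ))))
    (Φ : ℝ → ℝ)
    (hΦ : ∀ θ : ℝ, Φ θ =
      (-1 : ℝ) ^ k * ‖μ‖ * (((q : ℝ) - 1) / r) * A
          * Real.sin (((p : ℝ) + 1) * ((q : ℝ) - 1) * θ / (2 * r) + ((p : ℝ) + 1) / 2 * ck)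
        + (((p : ℝ) - 1) / r) * B
          * Real.sin (((p : ℝ) - 1) * ((q : ℝ) + 1) * θ / (2 * r))) :
    ∀ θ : ℝ, deriv Pk θ =
      -2 * Complex.exp (Complex.I * ((((p : ℝ) - 1) * ((q : ℝ) - 1) * θ / (2 * r) : ℝ) : ℂ))
        * (Φ θ : ℂ) := by
  intro θ
  have hp2 : (2 : ℝ) ≤ (p : ℝ) := by exact_mod_cast hp
  have hq2 : (2 : ℝ) ≤ (q : ℝ) := by exact_mod_cast hq
  have hp0 : (0 : ℝ) < (p : ℝ) := by linarith
  have hq0 : (0 : ℝ) < (q : ℝ) := by linarith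
  have hp1 : ((p : ℝ) - 1) ≠ 0 := by linarith
  have hq1 : ((q : ℝ) - 1) ≠ 0 := by linarith
  have hrpos : 0 < r := by
    rw [hr]; exact Nat.gcd_pos_of_pos_left _ (by omega)
  have hrR : ((r : ℝ)) ≠ 0 := by positivity
  -- A^p, B^q
  have hApow : (p : ℝ) * A ^ p = A := by
    have hA' : A = (p : ℝ) ^ (-(1 / ((p : ℝ) - 1))) := by
      rw [hA, Real.rpow_neg hp0.le, one_div]
    rw [hA', ← Real.rpow_natCast ((p : ℝ) ^ (-(1 / ((p : ℝ) - 1)))) p,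
      ← Real.rpow_mul hp0.le]
    rw [show (-(1 / ((p : ℝ) - 1))) * (p : ℕ) = -(1 / ((p : ℝ) - 1)) - 1 by
      field_simp; ring]
    rw [Real.rpow_sub hp0, Real.rpow_one]
    field_simp
  have hBpow : (q : ℝ) * B ^ q = B := by
    have hB' : B = (q : ℝ) ^ (-(1 / ((q : ℝ) - 1))) := by
      rw [hB, Real.rpow_neg hq0.le, one_div]
    rw [hB', ← Real.rpow_natCast ((q : ℝ) ^ (-(1 / ((q : ℝ) - 1)))) q,
      ← Real.rpow_mul hq0.le]
    rw [show (-(1 / ((q : ℝ) - 1))) * (q : ℕ) = -(1 / ((q : ℝ) - 1)) - 1 by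
      field_simp; ring]
    rw [Real.rpow_sub hq0, Real.rpow_one]
    field_simp
  have hApC : (p : ℂ) * ((A : ℝ) : ℂ) ^ p = (A : ℂ) := by exact_mod_cast congrArg (Complex.ofReal) hApow
  have hBqC : (q : ℂ) * ((B : ℝ) : ℂ) ^ q = (B : ℂ) := by exact_mod_cast congrArg (Complex.ofReal) hBpow
  -- argument relation
  have ha : Complex.arg μ = Real.pi * k - ((p : ℝ) - 1) * ck / 2 := by
    rw [hck]; field_simp; ring
  -- derivative computation
  have h1 := (hda ((p : ℝ) * ((q : ℝ) - 1) / r) ((p : ℝ) * ck)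
    (fun t => (p : ℝ) * ((q : ℝ) - 1) * t / r + (p : ℝ) * ck)
    (by intro t; show (p : ℝ) * ((q : ℝ) - 1) * t / r + (p : ℝ) * ck = _; ring) θ).const_mul
    ((A : ℂ) ^ p)
  have h2 := (hdan (((q : ℝ) - 1) / r) ck
    (fun t => ((q : ℝ) - 1) * t / r + ck)
    (by intro t; show ((q : ℝ) - 1) * t / r + ck = _; ring) θ).const_mul ((A : ℂ))
  have h3 := (hda ((q : ℝ) * ((p : ℝ) - 1) / r) 0
    (fun t => (q : ℝ) * ((p : ℝ) - 1) * t / r)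
    (by intro t; show (q : ℝ) * ((p : ℝ) - 1) * t / r = _; ring) θ).const_mul ((B : ℂ) ^ q)
  have h4 := (hdan (((p : ℝ) - 1) / r) 0
    (fun t => ((p : ℝ) - 1) * t / r)
    (by intro t; show ((p : ℝ) - 1) * t / r = _; ring) θ).const_mul ((B : ℂ))
  have hg := ((((h1.add h2).const_mul μ).add h3).add h4)
  have hPkD := hg.congr_of_eventuallyEq (Filter.Eventually.of_forall hPk)
  rw [hPkD.deriv]
  beta_reduce
  rw [hΦ θ]
  simp only [E_def, E_neg_def]
  push_cast [-Complex.ofReal_sin]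
  rw [sin_cast, sin_cast, negone_pow]
  -- replace μ
  have hμE : μ = ((‖μ‖ : ℝ) : ℂ) * E (Complex.arg μ) := by
    unfold E
    rw [mul_comm Complex.I, Complex.norm_mul_exp_arg_mul_I]
  conv_lhs => rw [hμE]
  -- exponent relations
  have R1 : E (Complex.arg μ) * E ((p : ℝ) * ((q : ℝ) - 1) * θ / r + (p : ℝ) * ck)
      = E (((p : ℝ) - 1) * ((q : ℝ) - 1) * θ / (2 * r))
        * (E (Real.pi * k)
          * E (((p : ℝ) + 1) * ((q : ℝ) - 1) * θ / (2 * r) + ((p : ℝ) + 1) / 2 * ck)) := by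
    rw [E_mul, E_mul, E_mul]; exact E_congr (by rw [ha]; field_simp; ring)
  have R2 : E (Complex.arg μ) * E (-(((q : ℝ) - 1) * θ / r + ck))
      = E (((p : ℝ) - 1) * ((q : ℝ) - 1) * θ / (2 * r))
        * (E (Real.pi * k)
          * E (-(((p : ℝ) + 1) * ((q : ℝ) - 1) * θ / (2 * r) + ((p : ℝ) + 1) / 2 * ck))) := by
    rw [E_mul, E_mul, E_mul]; exact E_congr (by rw [ha]; field_simp; ring)
  have R3 : E ((q : ℝ) * ((p : ℝ) - 1) * θ / r)
      = E (((p : ℝ) - 1) * ((q : ℝ) - 1) * θ / (2 * r))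
        * E (((p : ℝ) - 1) * ((q : ℝ) + 1) * θ / (2 * r)) := by
    rw [E_mul]; exact E_congr (by field_simp; ring)
  have R4 : E (-(((p : ℝ) - 1) * θ / r))
      = E (((p : ℝ) - 1) * ((q : ℝ) - 1) * θ / (2 * r))
        * E (-(((p : ℝ) - 1) * ((q : ℝ) + 1) * θ / (2 * r))) := by
    rw [E_mul]; exact E_congr (by field_simp; ring)
  linear_combination
    (Complex.I * ((‖μ‖ : ℝ) : ℂ) * ((A : ℂ)) ^ p * (p : ℂ) * ((q : ℂ) - 1) / (r : ℂ)) * R1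
    - (Complex.I * ((‖μ‖ : ℝ) : ℂ) * (A : ℂ) * ((q : ℂ) - 1) / (r : ℂ)) * R2
    + (Complex.I * ((B : ℂ)) ^ q * (q : ℂ) * ((p : ℂ) - 1) / (r : ℂ)) * R3
    - (Complex.I * (B : ℂ) * ((p : ℂ) - 1) / (r : ℂ)) * R4
    + (Complex.I * ((‖μ‖ : ℝ) : ℂ) * ((q : ℂ) - 1) / (r : ℂ)
        * (E (((p : ℝ) - 1) * ((q : ℝ) - 1) * θ / (2 * r))
          * (E (Real.pi * k)
            * E (((p : ℝ) + 1) * ((q : ℝ) - 1) * θ / (2 * r) + ((p : ℝ) + 1) / 2 * ck)))) * hApC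
    + (Complex.I * ((p : ℂ) - 1) / (r : ℂ)
        * (E (((p : ℝ) - 1) * ((q : ℝ) - 1) * θ / (2 * r))
          * E (((p : ℝ) - 1) * ((q : ℝ) + 1) * θ / (2 * r)))) * hBqC
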